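/- Fix θ ∈ ℝ with θ/π irrational. The subgroup Dic∞ of GL(2,ℂ) generated by the matrices x = !![0,-1;1,0] and a = !![exp(iθ),0;0,exp(-iθ)] is isomorphic to the group presented by two generators x, a subject to the relations x⁴ = 1 and x⁻¹ a x = a⁻¹ (the infinite dicyclic group). -/

import Mathlib

open Matrix Multiplicative

def dicyclicInfRels : Set (FreeGroup Bool) :=
  {(FreeGroup.of true) ^ 4,
    (FreeGroup.of true)⁻¹ * FreeGroup.of false * FreeGroup.of true * FreeGroup.of false}
namespace DicAux

lemma pow_mod_four {G : Type*} [Monoid G] {x : G} (h : x ^ 4 = 1) (m : ℕ) :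
    x ^ (m % 4) = x ^ m := by
  conv_rhs => rw [← Nat.div_add_mod m 4, pow_add, pow_mul, h, one_pow, one_mul]

/-- A hom from `Multiplicative (ZMod 4)` given an element with `x ^ 4 = 1`. -/
def zmod4Hom {G : Type*} [Monoid G] (x : G) (h : x ^ 4 = 1) : Multiplicative (ZMod 4) →* G where
  toFun k := x ^ (Multiplicative.toAdd k).val
  map_one' := by simp
  map_mul' a b := by
    show x ^ (Multiplicative.toAdd a + Multiplicative.toAdd b).val = _
    rw [ZMod.val_add, pow_mod_four h, pow_add]

lemma conj_of_rel {H : Type*} [Group H] {x a : H} (h : x⁻¹ * a * x * a = 1) :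
    x * a * x⁻¹ = a⁻¹ := by
  have h1 : a * x * a = x := by
    have := congrArg (x * ·) h
    simpa [← mul_assoc] using this
  have h2 : x * a = a⁻¹ * x := by
    conv_rhs => rw [← h1]
    group
  rw [h2]; group

/-- inversion as an automorphism of `Multiplicative ℤ`. -/
def ι : MulAut (Multiplicative ℤ) := MulEquiv.inv (Multiplicative ℤ)

lemma ι_sq : ι * ι = 1 := by
  ext z
  show ι (ι z) = z
  simp [ι]

lemma ι_pow_four : ι ^ 4 = 1 := by
  have : (4 : ℕ) = 2 * 2 := rfl
  rw [this, pow_mul, sq ι, ι_sq, one_pow]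

def φ : Multiplicative (ZMod 4) →* MulAut (Multiplicative ℤ) := zmod4Hom ι ι_pow_four

abbrev Dic := SemidirectProduct (Multiplicative ℤ) (Multiplicative (ZMod 4)) φ

lemma ι_pow_apply (v : ℕ) : (ι ^ v) (ofAdd (1 : ℤ)) = ofAdd ((-1 : ℤ) ^ v) := by
  induction v with
  | zero => simp
  | succ n ih =>
    rw [pow_succ', MulAut.mul_apply, ih]
    show (ofAdd ((-1 : ℤ) ^ n))⁻¹ = _
    rw [← ofAdd_neg, pow_succ']
    ring_nf

lemma conj_pow_eq {H : Type*} [Group H] {x a : H} (hc : x * a * x⁻¹ = a⁻¹) (v : ℕ) :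
    x ^ v * a * (x ^ v)⁻¹ = a ^ ((-1 : ℤ) ^ v) := by
  induction v with
  | zero => simp
  | succ n ih =>
    have : x ^ (n + 1) * a * (x ^ (n + 1))⁻¹ = x * (x ^ n * a * (x ^ n)⁻¹) * x⁻¹ := by
      rw [pow_succ']; group
    rw [this, ih]
    have : x * a ^ ((-1 : ℤ) ^ n) * x⁻¹ = (MulAut.conj x) (a ^ ((-1 : ℤ) ^ n)) := by
      simp [MulAut.conj_apply]
    rw [this, map_zpow, MulAut.conj_apply, hc, _root_.inv_zpow, ← _root_.zpow_neg]
    congr 1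
    ring

/-- The universal map out of `Dic` determined by `x, a` with `x⁴ = 1`, `x a x⁻¹ = a⁻¹`. -/
def dicLift {H : Type*} [Group H] (x a : H) (hx : x ^ 4 = 1) (hc : x * a * x⁻¹ = a⁻¹) :
    Dic →* H :=
  SemidirectProduct.lift (zpowersHom H a) (zmod4Hom x hx) (by
    intro k
    apply MonoidHom.ext_mint
    show a ^ (Multiplicative.toAdd ((φ k) (ofAdd 1))) = (MulAut.conj ((zmod4Hom x hx) k)) (a ^ Multiplicative.toAdd (ofAdd (1:ℤ)))
    show a ^ (Multiplicative.toAdd ((ι ^ (Multiplicative.toAdd k).val) (ofAdd 1))) =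
      (MulAut.conj (x ^ (Multiplicative.toAdd k).val)) (a ^ (1 : ℤ))
    rw [ι_pow_apply, toAdd_ofAdd, zpow_one, MulAut.conj_apply, conj_pow_eq hc])

lemma dicLift_inl {H : Type*} [Group H] (x a : H) (hx : x ^ 4 = 1) (hc : x * a * x⁻¹ = a⁻¹)
    (n : Multiplicative ℤ) : dicLift x a hx hc (SemidirectProduct.inl n) = a ^ Multiplicative.toAdd n := by
  simp [dicLift]

lemma dicLift_inr {H : Type*} [Group H] (x a : H) (hx : x ^ 4 = 1) (hc : x * a * x⁻¹ = a⁻¹)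
    (k : Multiplicative (ZMod 4)) :
    dicLift x a hx hc (SemidirectProduct.inr k) = x ^ (Multiplicative.toAdd k).val := by
  simp [dicLift]; rfl

lemma dicLift_apply {H : Type*} [Group H] (x a : H) (hx : x ^ 4 = 1) (hc : x * a * x⁻¹ = a⁻¹)
    (p : Dic) : dicLift x a hx hc p = a ^ Multiplicative.toAdd p.left * x ^ (Multiplicative.toAdd p.right).val := by
  rw [← dicLift_inl x a hx hc, ← dicLift_inr x a hx hc, ← _root_.map_mul]
  congr 1
  exact (SemidirectProduct.inl_left_mul_inr_right p).symm

end DicAux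

namespace DicAux2

abbrev P := PresentedGroup dicyclicInfRels

lemma rel_one : ∀ r ∈ dicyclicInfRels, (PresentedGroup.mk dicyclicInfRels) r = 1 := by
  intro r hr
  exact (QuotientGroup.eq_one_iff r).mpr (Subgroup.subset_normalClosure hr)

lemma xbar_pow_four : (PresentedGroup.of (rels := dicyclicInfRels) true) ^ 4 = 1 := by
  have := rel_one _ (Set.mem_insert _ _)
  rw [map_pow] at this
  exact this

lemma rel2 : (PresentedGroup.of (rels := dicyclicInfRels) true)⁻¹ *
    PresentedGroup.of false * PresentedGroup.of true * PresentedGroup.of false = 1 := by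
  have := rel_one _ (Set.mem_insert_of_mem _ rfl)
  simp only [_root_.map_mul, map_inv] at this
  exact this

end DicAux2

namespace DicAux3
open DicAux DicAux2 SemidirectProduct PresentedGroup

def xG : Dic := inr (ofAdd (1 : ZMod 4))
def aG : Dic := inl (ofAdd (1 : ℤ))

lemma val_one : (1 : ZMod 4).val = 1 := rfl

lemma hxG4 : xG ^ 4 = 1 := by
  rw [xG, ← map_pow]
  have : (ofAdd (1 : ZMod 4)) ^ 4 = 1 := by decide
  rw [this, _root_.map_one]

lemma ι_apply (z : Multiplicative ℤ) : ι z = z⁻¹ := rfl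

lemma φ_ofAdd_one : φ (ofAdd (1 : ZMod 4)) = ι := by
  show ι ^ (Multiplicative.toAdd (ofAdd (1 : ZMod 4))).val = ι
  rw [toAdd_ofAdd, val_one, pow_one]

lemma ι_inv : ι⁻¹ = ι := by
  have := ι_sq
  rw [← eq_inv_iff_mul_eq_one] at this
  exact this.symm

lemma relG : xG⁻¹ * aG * xG * aG = 1 := by
  have h := SemidirectProduct.inl_aut_inv (φ := φ) (ofAdd (1 : ZMod 4)) (ofAdd (1 : ℤ))
  rw [φ_ofAdd_one, ι_inv, ι_apply] at h
  rw [xG, aG, ← map_inv]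
  rw [← h, ← _root_.map_mul, inv_mul_cancel, _root_.map_one]

def ψ : P →* Dic :=
  PresentedGroup.toGroup (f := fun b => cond b xG aG) (by
    intro r hr
    rcases hr with rfl | hr
    · simp only [map_pow, FreeGroup.lift_apply_of]
      exact hxG4
    · rw [Set.mem_singleton_iff] at hr
      subst hr
      simp only [_root_.map_mul, map_inv, FreeGroup.lift_apply_of]
      exact relG)

lemma ψ_of_true : ψ (PresentedGroup.of true) = xG := PresentedGroup.toGroup.of _
lemma ψ_of_false : ψ (PresentedGroup.of false) = aG := PresentedGroup.toGroup.of _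

def χ : Dic →* P :=
  dicLift (PresentedGroup.of true) (PresentedGroup.of false) xbar_pow_four (conj_of_rel rel2)

lemma comp1 : χ.comp ψ = MonoidHom.id P := by
  apply PresentedGroup.ext
  intro b
  cases b
  · rw [MonoidHom.comp_apply, ψ_of_false, MonoidHom.id_apply, aG, χ, dicLift_inl]
    simp
  · rw [MonoidHom.comp_apply, ψ_of_true, MonoidHom.id_apply, xG, χ, dicLift_inr]
    rw [toAdd_ofAdd, val_one, pow_one]

lemma comp2 : ψ.comp χ = MonoidHom.id Dic := by
  apply SemidirectProduct.hom_ext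
  · apply MonoidHom.ext_mint
    rw [MonoidHom.comp_apply, MonoidHom.comp_apply, χ, dicLift_inl, toAdd_ofAdd, zpow_one,
      ψ_of_false]
    rfl
  · apply MonoidHom.ext
    intro k
    rw [MonoidHom.comp_apply, MonoidHom.comp_apply, χ, dicLift_inr, map_pow, ψ_of_true,
      MonoidHom.comp_apply, MonoidHom.id_apply, xG, ← map_pow]
    congr 1
    have : (ofAdd (1 : ZMod 4)) ^ (Multiplicative.toAdd k).val
        = ofAdd (((Multiplicative.toAdd k).val : ZMod 4)) := by
      rw [← ofAdd_nsmul]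
      congr 1
      rw [nsmul_eq_mul, mul_one]
    rw [this, ZMod.natCast_rightInverse (Multiplicative.toAdd k), ofAdd_toAdd]

def e₁ : P ≃* Dic := MonoidHom.toMulEquiv ψ χ comp1 comp2

end DicAux3

namespace DicAux4
open DicAux Complex

lemma key1 {θ : ℝ} (hθ : Irrational (θ / Real.pi)) {m : ℤ}
    (h : Complex.exp (m * θ * I) = 1) : m = 0 := by
  by_contra hm
  obtain ⟨n, hn⟩ := Complex.exp_eq_one_iff.mp h
  have h' : ((m : ℂ) * θ) * I = ((n : ℂ) * (2 * Real.pi)) * I := by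
    push_cast at hn ⊢
    linear_combination hn
  have h2 := mul_right_cancel₀ Complex.I_ne_zero h'
  have h3 : (m : ℝ) * θ = n * (2 * Real.pi) := by exact_mod_cast h2
  have hm' : (m : ℝ) ≠ 0 := Int.cast_ne_zero.mpr hm
  have hπ : Real.pi ≠ 0 := Real.pi_ne_zero
  refine hθ ⟨2 * n / m, ?_⟩
  push_cast
  field_simp
  linear_combination -h3

lemma key2 {θ : ℝ} (hθ : Irrational (θ / Real.pi)) {m : ℤ}
    (h : Complex.exp (m * θ * I) = -1) : False := by
  rw [← Complex.exp_pi_mul_I, Complex.exp_eq_exp_iff_exists_int] at h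
  obtain ⟨n, hn⟩ := h
  have h' : ((m : ℂ) * θ) * I = ((Real.pi : ℂ) + n * (2 * Real.pi)) * I := by
    push_cast at hn ⊢
    linear_combination hn
  have h2 := mul_right_cancel₀ Complex.I_ne_zero h'
  have h3 : (m : ℝ) * θ = Real.pi + n * (2 * Real.pi) := by exact_mod_cast h2
  have hπ : Real.pi ≠ 0 := Real.pi_ne_zero
  by_cases hm : m = 0
  · subst hm
    have h4 : ((2 * n + 1 : ℤ) : ℝ) * Real.pi = 0 := by push_cast; linear_combination -h3
    rcases mul_eq_zero.mp h4 with h5 | h5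
    · have : (2 * n + 1 : ℤ) = 0 := by exact_mod_cast h5
      omega
    · exact hπ h5
  · have hm' : (m : ℝ) ≠ 0 := Int.cast_ne_zero.mpr hm
    refine hθ ⟨(2 * n + 1) / m, ?_⟩
    push_cast
    field_simp
    linear_combination -h3

end DicAux4

set_option maxHeartbeats 1000000 in
theorem closure_x_a_iso_presented_dicyclicInf
    (θ : ℝ) (hθ : Irrational (θ / Real.pi)) (X A : GL (Fin 2) ℂ)
    (hX : (X : Matrix (Fin 2) (Fin 2) ℂ) = !![0, -1; 1, 0])
    (hA : (A : Matrix (Fin 2) (Fin 2) ℂ) =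
      !![Complex.exp (θ * Complex.I), 0; 0, Complex.exp (-(θ * Complex.I))]) :
    Nonempty ((Subgroup.closure {X, A} : Subgroup (GL (Fin 2) ℂ)) ≃*
      PresentedGroup dicyclicInfRels) := by
  classical
  open DicAux DicAux2 DicAux3 DicAux4 Complex in
  -- basic matrix facts
  have hef : Complex.exp (θ * I) * Complex.exp (-(θ * I)) = 1 := by
    rw [← Complex.exp_add]; simp
  have hfe : Complex.exp (-(θ * I)) * Complex.exp (θ * I) = 1 := by
    rw [← Complex.exp_add]; simp
  have hXinvM : ((X⁻¹ : GL (Fin 2) ℂ) : Matrix (Fin 2) (Fin 2) ℂ) = !![0, 1; -1, 0] := by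
    rw [Matrix.coe_units_inv, hX]
    exact Matrix.inv_eq_right_inv
      (by norm_num [Matrix.mul_fin_two]; exact Matrix.one_fin_two.symm)
  have hAinvM : ((A⁻¹ : GL (Fin 2) ℂ) : Matrix (Fin 2) (Fin 2) ℂ) =
      !![Complex.exp (-(θ * I)), 0; 0, Complex.exp (θ * I)] := by
    rw [Matrix.coe_units_inv, hA]
    exact Matrix.inv_eq_right_inv
      (by norm_num [Matrix.mul_fin_two, hef, hfe]; exact Matrix.one_fin_two.symm)
  have hX4 : X ^ 4 = 1 := by
    apply Units.ext
    rw [Units.val_pow_eq_pow_val, hX]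
    norm_num [pow_succ, Matrix.mul_fin_two]
    exact Matrix.one_fin_two.symm
  have hrel : X⁻¹ * A * X * A = 1 := by
    apply Units.ext
    rw [Units.val_mul, Units.val_mul, Units.val_mul, hXinvM, hA, hX]
    norm_num [Matrix.mul_fin_two, hef, hfe]
    exact Matrix.one_fin_two.symm
  have hconj : X * A * X⁻¹ = A⁻¹ := conj_of_rel hrel
  -- powers of A
  have hApow : ∀ n : ℤ, ((A ^ n : GL (Fin 2) ℂ) : Matrix (Fin 2) (Fin 2) ℂ) =
      !![Complex.exp (n * θ * I), 0; 0, Complex.exp (-(n * θ * I))] := by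
    intro n
    induction n using Int.induction_on with
    | zero => rw [zpow_zero, Units.val_one]; norm_num; exact Matrix.one_fin_two
    | succ k ih =>
      rw [_root_.zpow_add_one, Units.val_mul, ih, hA, Matrix.mul_fin_two]
      ext i j
      fin_cases i <;> fin_cases j <;> simp <;>
        (rw [← Complex.exp_add]; congr 1; push_cast; ring)
    | pred k ih =>
      rw [_root_.zpow_sub_one, Units.val_mul, ih, hAinvM, Matrix.mul_fin_two]
      ext i j
      fin_cases i <;> fin_cases j <;> simp <;>
        (rw [← Complex.exp_add]; congr 1; push_cast; ring)
  -- the lift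
  set g : Dic →* GL (Fin 2) ℂ := dicLift X A hX4 hconj with hg
  have hginj : Function.Injective g := by
    rw [injective_iff_map_eq_one]
    rintro ⟨n, k⟩ hp
    rw [hg, dicLift_apply] at hp
    simp only at hp
    have hpM : (!![Complex.exp ((Multiplicative.toAdd n) * θ * I), 0; 0,
        Complex.exp (-((Multiplicative.toAdd n) * θ * I))] : Matrix (Fin 2) (Fin 2) ℂ) *
        (!![0, -1; 1, 0] : Matrix (Fin 2) (Fin 2) ℂ) ^ (Multiplicative.toAdd k).val = 1 := by
      rw [← hApow, ← hX]
      have := congrArg (Units.val) hp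
      rwa [Units.val_mul, Units.val_pow_eq_pow_val, Units.val_one] at this
    have hv : (Multiplicative.toAdd k).val < 4 := ZMod.val_lt _
    set m : ℤ := Multiplicative.toAdd n with hm
    set v : ℕ := (Multiplicative.toAdd k).val with hvdef
    have hn1 : m = 0 ∧ v = 0 := by
      interval_cases v
      · rw [pow_zero, mul_one] at hpM
        have h00 := congrArg (fun M : Matrix (Fin 2) (Fin 2) ℂ => M 0 0) hpM
        simp [Matrix.one_apply] at h00
        exact ⟨key1 hθ h00, rfl⟩
      · rw [pow_one] at hpM
        have h00 := congrArg (fun M : Matrix (Fin 2) (Fin 2) ℂ => M 0 0) hpM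
        simp [Matrix.mul_fin_two, Matrix.one_apply] at h00
      · have h2 : (!![0, -1; 1, 0] : Matrix (Fin 2) (Fin 2) ℂ) ^ 2 = !![-1, 0; 0, -1] := by
          norm_num [sq, Matrix.mul_fin_two]
        rw [h2] at hpM
        have h00 := congrArg (fun M : Matrix (Fin 2) (Fin 2) ℂ => M 0 0) hpM
        simp [Matrix.mul_fin_two, Matrix.one_apply] at h00
        have : Complex.exp (m * θ * I) = -1 := by
          have := congrArg Neg.neg h00
          simpa using this
        exact absurd this (fun hh => key2 hθ hh)
      · have h3 : (!![0, -1; 1, 0] : Matrix (Fin 2) (Fin 2) ℂ) ^ 3 = !![0, 1; -1, 0] := by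
          norm_num [pow_succ, Matrix.mul_fin_two]
        rw [h3] at hpM
        have h00 := congrArg (fun M : Matrix (Fin 2) (Fin 2) ℂ => M 0 0) hpM
        simp [Matrix.mul_fin_two, Matrix.one_apply] at h00
    obtain ⟨hm0, hv0⟩ := hn1
    have hnn : n = 1 := by
      have : Multiplicative.toAdd n = 0 := hm0
      rw [← ofAdd_toAdd n, this, ofAdd_zero]
    have hkk : k = 1 := by
      have : Multiplicative.toAdd k = 0 := (ZMod.val_eq_zero _).mp hv0
      rw [← ofAdd_toAdd k, this, ofAdd_zero]
    rw [hnn, hkk]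
    rfl
  have hrange : g.range = Subgroup.closure {X, A} := by
    apply le_antisymm
    · rintro y ⟨p, rfl⟩
      rw [hg, dicLift_apply]
      have hAc : A ∈ Subgroup.closure {X, A} :=
        Subgroup.subset_closure (Set.mem_insert_of_mem X rfl)
      have hXc : X ∈ Subgroup.closure {X, A} :=
        Subgroup.subset_closure (Set.mem_insert X {A})
      exact Subgroup.mul_mem _ (Subgroup.zpow_mem _ hAc _) (Subgroup.pow_mem _ hXc _)
    · rw [Subgroup.closure_le]
      rintro y hy
      rcases hy with rfl | hy
      · exact ⟨SemidirectProduct.inr (ofAdd 1), by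
          rw [hg, dicLift_inr, toAdd_ofAdd, val_one, pow_one]⟩
      · rw [Set.mem_singleton_iff] at hy
        subst hy
        exact ⟨SemidirectProduct.inl (ofAdd 1), by rw [hg, dicLift_inl, toAdd_ofAdd, zpow_one]⟩
  exact ⟨(MulEquiv.subgroupCongr hrange.symm).trans
    ((MonoidHom.ofInjective hginj).symm.trans e₁.symm)⟩
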